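/- Let A ∈ ℚ^{m×n} be a rational matrix, let b ∈ ℝ^m (not necessarily rational), and let P = {x ∈ ℝ^n : Ax ≥ b}. Let α ∈ ℤ^n and β ∈ ℝ be such that α·x ≥ β holds for all x ∈ P, and let F = P ∩ {x : α·x = β} be the corresponding face of P. Then for every t ∈ ℕ, F^{(t)} = P^{(t)} ∩ F, where the superscript (t) denotes the t-th iterated Chvátal closure. -/
import Mathlib

open Finset

/-- The Chvátal closure of `Q ⊆ ℝ^n`: intersection of the half-spaces `c·x ≥ ⌈δ⌉` over all
integral `c` and real `δ` such that `c·x ≥ δ` is valid for `Q`. -/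
def chvatalClosure {n : ℕ} (Q : Set (Fin n → ℝ)) : Set (Fin n → ℝ) :=
  {x | ∀ (c : Fin n → ℤ) (δ : ℝ),
    (∀ y ∈ Q, δ ≤ ∑ j, (c j : ℝ) * y j) → (⌈δ⌉ : ℝ) ≤ ∑ j, (c j : ℝ) * x j}

/-- The `t`-th iterated Chvátal closure. -/
def iterChvatal {n : ℕ} (Q : Set (Fin n → ℝ)) : ℕ → Set (Fin n → ℝ)
  | 0 => Q
  | t + 1 => chvatalClosure (iterChvatal Q t)

theorem farkas_infeasible : ∀ (n : ℕ) {ι : Type} [Fintype ι]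
    (M : ι → Fin n → ℝ) (b : ι → ℝ),
    (¬ ∃ x : Fin n → ℝ, ∀ i, b i ≤ ∑ j, M i j * x j) →
    ∃ y : ι → ℝ, (∀ i, 0 ≤ y i) ∧ (∀ j, ∑ i, y i * M i j = 0) ∧ 0 < ∑ i, y i * b i := by
  intro n
  induction n with
  | zero =>
    intro ι _ M b h
    classical
    push_neg at h
    obtain ⟨i₀, hi₀⟩ := h (fun j => 0)
    refine ⟨fun i => if i = i₀ then 1 else 0, ?_, ?_, ?_⟩
    · intro i; dsimp only; split <;> norm_num
    · intro j; exact j.elim0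
    · have hs : ∑ i, (if i = i₀ then (1:ℝ) else 0) * b i = b i₀ := by
        rw [Finset.sum_eq_single i₀]
        · simp
        · intro i _ hne; simp [hne]
        · intro hmem; exact absurd (Finset.mem_univ i₀) hmem
      rw [hs]
      simpa using hi₀
  | succ n IH =>
    intro ι _ M b H
    classical
    set a : ι → ℝ := fun i => M i 0 with ha
    set r : ι → Fin n → ℝ := fun i k => M i k.succ with hr
    set w1 : ι → ι → ℝ := fun i j => if 0 < a i ∧ a j < 0 then -(a j) else 0 with hw1
    set w2 : ι → ι → ℝ := fun i j => if 0 < a i ∧ a j < 0 then a i else 0 with hw2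
    set N : (ι × ι) ⊕ ι → Fin n → ℝ := fun t k =>
      match t with
      | .inl (i, j) => w1 i j * r i k + w2 i j * r j k
      | .inr i => if a i = 0 then r i k else 0 with hN
    set e : (ι × ι) ⊕ ι → ℝ := fun t =>
      match t with
      | .inl (i, j) => w1 i j * b i + w2 i j * b j
      | .inr i => if a i = 0 then b i else 0 with he
    -- Claim A : feasibility of the projected system gives feasibility of the original
    have claimA : (∃ x' : Fin n → ℝ, ∀ t, e t ≤ ∑ k, N t k * x' k) →
        ∃ x : Fin (n+1) → ℝ, ∀ i, b i ≤ ∑ j, M i j * x j := by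
      rintro ⟨x', hx'⟩
      set R : ι → ℝ := fun i => ∑ k, r i k * x' k with hR
      have h0 : ∀ i, a i = 0 → b i ≤ R i := by
        intro i hi
        have := hx' (.inr i)
        simpa [hN, he, hi, hR] using this
      have hpair : ∀ i j, 0 < a i → a j < 0 →
          -(a j) * b i + a i * b j ≤ -(a j) * R i + a i * R j := by
        intro i j hi hj
        have h2 := hx' (.inl (i, j))
        have hw1' : w1 i j = -(a j) := by simp only [hw1]; exact if_pos ⟨hi, hj⟩
        have hw2' : w2 i j = a i := by simp only [hw2]; exact if_pos ⟨hi, hj⟩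
        simp only [hN, he, hw1', hw2'] at h2
        calc -(a j) * b i + a i * b j ≤ ∑ k, (-(a j) * r i k + a i * r j k) * x' k := h2
          _ = -(a j) * R i + a i * R j := by
              simp [add_mul, mul_assoc, Finset.sum_add_distrib, ← Finset.mul_sum, hR]
      set L : ι → ℝ := fun i => (b i - R i) / a i with hL
      set Sp : Finset ι := univ.filter (fun i => 0 < a i) with hSp
      set Sn : Finset ι := univ.filter (fun i => a i < 0) with hSn
      have hLL : ∀ i ∈ Sp, ∀ j ∈ Sn, L i ≤ L j := by
        intro i hi j hj
        simp only [hSp, mem_filter] at hi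
        simp only [hSn, mem_filter] at hj
        have hi := hi.2; have hj := hj.2
        have hLj : L j = (R j - b j) / (-(a j)) := by
          simp only [hL]
          rw [show (b j - R j) = -(R j - b j) by ring, neg_div, ← div_neg]
        rw [hLj]
        simp only [hL]
        rw [div_le_div_iff₀ hi (by linarith : (0:ℝ) < -(a j))]
        nlinarith [hpair i j hi hj]
      set x₀ : ℝ := if hp : Sp.Nonempty then Sp.sup' hp L
        else if hn : Sn.Nonempty then Sn.inf' hn L else 0 with hx₀
      refine ⟨Fin.cons x₀ x', fun i => ?_⟩
      have hsum : ∑ j, M i j * (Fin.cons x₀ x' : Fin (n+1) → ℝ) j = a i * x₀ + R i := by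
        rw [Fin.sum_univ_succ]
        simp [ha, hr, hR]
      rw [hsum]
      rcases lt_trichotomy (a i) 0 with hai | hai | hai
      · -- a i < 0 : need x₀ ≤ L i
        have hiSn : i ∈ Sn := by simp only [hSn, mem_filter]; exact ⟨mem_univ i, hai⟩
        have hxle : x₀ ≤ L i := by
          by_cases hp : Sp.Nonempty
          · rw [hx₀, dif_pos hp]
            obtain ⟨i', hi', hEq⟩ := Finset.exists_mem_eq_sup' hp L
            rw [hEq]
            exact hLL i' hi' i hiSn
          · rw [hx₀, dif_neg hp, dif_pos ⟨i, hiSn⟩]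
            exact Finset.inf'_le L hiSn
        simp only [hL] at hxle
        have := (le_div_iff_of_neg hai).mp hxle
        linarith
      · rw [show a i = (0:ℝ) from hai]
        rw [zero_mul, zero_add]
        exact h0 i hai
      · have hiSp : i ∈ Sp := by simp only [hSp, mem_filter]; exact ⟨mem_univ i, hai⟩
        have hxge : L i ≤ x₀ := by
          rw [hx₀, dif_pos ⟨i, hiSp⟩]
          exact Finset.le_sup' L hiSp
        simp only [hL] at hxge
        have := (div_le_iff₀ hai).mp hxge
        linarith
    -- the projected system is infeasible
    have Hnew : ¬ ∃ x' : Fin n → ℝ, ∀ t, e t ≤ ∑ k, N t k * x' k := fun h => H (claimA h)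
    obtain ⟨y', hy'0, hy'M, hy'b⟩ := IH N e Hnew
    -- transfer the certificate
    set y : ι → ℝ := fun i => (∑ j, y' (.inl (i, j)) * w1 i j) +
      (∑ j, y' (.inl (j, i)) * w2 j i) + (if a i = 0 then y' (.inr i) else 0) with hy
    have key : ∀ φ : ι → ℝ, ∑ i, y i * φ i =
        ∑ t, y' t * (match t with
          | .inl (i, j) => w1 i j * φ i + w2 i j * φ j
          | .inr i => if a i = 0 then φ i else 0) := by
      intro φ
      rw [Fintype.sum_sum_type]
      simp only [Fintype.sum_prod_type]
      have expand : ∀ i, y i * φ i = (∑ j, y' (.inl (i, j)) * w1 i j * φ i) +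
          (∑ j, y' (.inl (j, i)) * w2 j i * φ i) +
          y' (.inr i) * (if a i = 0 then φ i else 0) := by
        intro i
        simp only [hy]
        have hif : (if a i = 0 then y' (.inr i) else 0) * φ i
            = y' (.inr i) * (if a i = 0 then φ i else 0) := by
          split <;> ring
        rw [add_mul, add_mul, hif, ← Finset.sum_mul, ← Finset.sum_mul]
      rw [Finset.sum_congr rfl (fun i _ => expand i)]
      rw [Finset.sum_add_distrib]
      congr 1
      rw [Finset.sum_add_distrib]
      have swap2 : ∑ i, ∑ j, y' (.inl (j, i)) * w2 j i * φ i
          = ∑ i, ∑ j, y' (.inl (i, j)) * w2 i j * φ j := Finset.sum_comm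
      rw [swap2, ← Finset.sum_add_distrib]
      refine Finset.sum_congr rfl fun i _ => ?_
      rw [← Finset.sum_add_distrib]
      refine Finset.sum_congr rfl fun j _ => ?_
      ring
    have hw1nn : ∀ i j, 0 ≤ w1 i j := by
      intro i j; simp only [hw1]; split
      · next h => linarith [h.2]
      · exact le_rfl
    have hw2nn : ∀ i j, 0 ≤ w2 i j := by
      intro i j; simp only [hw2]; split
      · next h => linarith [h.1]
      · exact le_rfl
    refine ⟨y, ?_, ?_, ?_⟩
    · intro i
      simp only [hy]
      have t1 : (0:ℝ) ≤ ∑ j, y' (.inl (i, j)) * w1 i j :=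
        Finset.sum_nonneg fun j _ => mul_nonneg (hy'0 _) (hw1nn i j)
      have t2 : (0:ℝ) ≤ ∑ j, y' (.inl (j, i)) * w2 j i :=
        Finset.sum_nonneg fun j _ => mul_nonneg (hy'0 _) (hw2nn j i)
      have t3 : (0:ℝ) ≤ if a i = 0 then y' (.inr i) else 0 := by
        split
        · exact hy'0 _
        · exact le_rfl
      linarith
    · intro j
      refine Fin.cases ?_ ?_ j
      · -- coordinate 0
        rw [show (∑ i, y i * M i 0) = ∑ i, y i * a i from rfl, key a]
        apply Finset.sum_eq_zero
        intro t _
        rcases t with ⟨i, j⟩ | i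
        · show y' (.inl (i, j)) * (w1 i j * a i + w2 i j * a j) = 0
          have hz : w1 i j * a i + w2 i j * a j = 0 := by
            by_cases h : 0 < a i ∧ a j < 0
            · simp only [hw1, hw2]; rw [if_pos h, if_pos h]; ring
            · simp only [hw1, hw2]; rw [if_neg h, if_neg h]; ring
          rw [hz, mul_zero]
        · show y' (.inr i) * (if a i = 0 then a i else 0) = 0
          by_cases h : a i = 0 <;> simp [h]
      · -- coordinate succ k
        intro k
        rw [show (∑ i, y i * M i k.succ) = ∑ i, y i * r i k from rfl,
          key (fun i => r i k)]
        rw [show (∑ t, y' t * (match t with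
          | .inl (i, j) => w1 i j * r i k + w2 i j * r j k
          | .inr i => if a i = 0 then r i k else 0)) = ∑ t, y' t * N t k from
          Finset.sum_congr rfl fun t _ => by rcases t with ⟨i, j⟩ | i <;> rfl]
        exact hy'M k
    · rw [key b]
      rw [show (∑ t, y' t * (match t with
        | .inl (i, j) => w1 i j * b i + w2 i j * b j
        | .inr i => if a i = 0 then b i else 0)) = ∑ t, y' t * e t from
        Finset.sum_congr rfl fun t _ => by rcases t with ⟨i, j⟩ | i <;> rfl]
      exact hy'b

theorem farkas_homog {n : ℕ} {ι : Type} [Fintype ι] (C : ι → Fin n → ℝ) (c : Fin n → ℝ)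
    (hv : ∀ x : Fin n → ℝ, (∀ i, 0 ≤ ∑ j, C i j * x j) → 0 ≤ ∑ j, c j * x j) :
    ∃ y : ι → ℝ, (∀ i, 0 ≤ y i) ∧ ∀ j, ∑ i, y i * C i j = c j := by
  classical
  set M : ι ⊕ Unit → Fin n → ℝ := fun t =>
    match t with
    | .inl i => C i
    | .inr _ => fun j => -(c j) with hM
  set b : ι ⊕ Unit → ℝ := fun t =>
    match t with
    | .inl _ => 0
    | .inr _ => 1 with hb
  have hinf : ¬ ∃ x : Fin n → ℝ, ∀ t, b t ≤ ∑ j, M t j * x j := by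
    rintro ⟨x, hx⟩
    have h1 : (1:ℝ) ≤ ∑ j, -(c j) * x j := hx (.inr ())
    have h2 : ∀ i, (0:ℝ) ≤ ∑ j, C i j * x j := fun i => hx (.inl i)
    have h3 := hv x h2
    have : ∑ j, -(c j) * x j = -∑ j, c j * x j := by
      rw [← Finset.sum_neg_distrib]
      exact Finset.sum_congr rfl fun j _ => by ring
    rw [this] at h1
    linarith
  obtain ⟨Y, hY0, hYM, hYb⟩ := farkas_infeasible n M b hinf
  set μ : ℝ := Y (.inr ()) with hμ
  have hμpos : 0 < μ := by
    have := hYb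
    rw [Fintype.sum_sum_type] at this
    simpa [hb, hμ] using this
  refine ⟨fun i => Y (.inl i) / μ, fun i => div_nonneg (hY0 _) hμpos.le, fun j => ?_⟩
  have := hYM j
  rw [Fintype.sum_sum_type] at this
  have hsum : ∑ i, Y (.inl i) * C i j + μ * (-(c j)) = 0 := by
    simpa [hM, hμ] using this
  have : ∑ i, Y (.inl i) * C i j = μ * c j := by linarith
  calc ∑ i, Y (.inl i) / μ * C i j = (∑ i, Y (.inl i) * C i j) / μ := by
        rw [Finset.sum_div]; exact Finset.sum_congr rfl fun i _ => by ring
    _ = (μ * c j) / μ := by rw [this]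
    _ = c j := by field_simp

theorem farkas_affine {n : ℕ} {ι : Type} [Fintype ι] (C : ι → Fin n → ℝ) (d : ι → ℝ)
    (hne : ∃ x : Fin n → ℝ, ∀ i, d i ≤ ∑ j, C i j * x j)
    (c : Fin n → ℝ) (δ : ℝ)
    (hv : ∀ x : Fin n → ℝ, (∀ i, d i ≤ ∑ j, C i j * x j) → δ ≤ ∑ j, c j * x j) :
    ∃ y : ι → ℝ, (∀ i, 0 ≤ y i) ∧ (∀ j, ∑ i, y i * C i j = c j) ∧ δ ≤ ∑ i, y i * d i := by
  classical
  obtain ⟨q, hq⟩ := hne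
  set CC : ι ⊕ Unit → Fin (n+1) → ℝ := fun t =>
    match t with
    | .inl i => Fin.cons (-(d i)) (C i)
    | .inr _ => Fin.cons 1 (fun _ => 0) with hCC
  set cobj : Fin (n+1) → ℝ := Fin.cons (-δ) c with hcobj
  have conssum : ∀ (u : ℝ) (w : Fin n → ℝ) (z : Fin (n+1) → ℝ),
      ∑ j, (Fin.cons u w : Fin (n+1) → ℝ) j * z j = u * z 0 + ∑ k, w k * z k.succ := by
    intro u w z
    rw [Fin.sum_univ_succ]
    simp
  have hv' : ∀ z : Fin (n+1) → ℝ, (∀ t, 0 ≤ ∑ j, CC t j * z j) → 0 ≤ ∑ j, cobj j * z j := by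
    intro z hz
    set t₀ : ℝ := z 0 with ht₀
    set x : Fin n → ℝ := fun k => z k.succ with hx
    have hrow : ∀ i, 0 ≤ -(d i) * t₀ + ∑ k, C i k * x k := by
      intro i
      have := hz (.inl i)
      rwa [show (∑ j, CC (.inl i) j * z j) = -(d i) * t₀ + ∑ k, C i k * x k from
        conssum _ _ z] at this
    have ht0 : 0 ≤ t₀ := by
      have := hz (.inr ())
      rw [show (∑ j, CC (.inr ()) j * z j) = 1 * t₀ + ∑ k, (0:ℝ) * x k from conssum _ _ z] at this
      simpa using this
    rw [show (∑ j, cobj j * z j) = -δ * t₀ + ∑ k, c k * x k from conssum _ _ z]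
    rcases eq_or_lt_of_le ht0 with h0 | hpos
    · -- t₀ = 0 : recession direction
      have hrec : ∀ i, (0:ℝ) ≤ ∑ k, C i k * x k := by
        intro i; have := hrow i; rw [← h0] at this; linarith
      set v : ℝ := ∑ k, c k * x k with hvdef
      set K : ℝ := ∑ k, c k * q k with hK
      have hδK : δ ≤ K := hv q hq
      by_cases hvneg : 0 ≤ v
      · rw [← h0]; linarith
      · push_neg at hvneg
        exfalso
        set s : ℝ := (K - δ + 1) / (-v) with hs
        have hspos : 0 < s := div_pos (by linarith) (by linarith)
        have hfeas : ∀ i, d i ≤ ∑ j, C i j * (q j + s * x j) := by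
          intro i
          have expand : ∑ j, C i j * (q j + s * x j)
              = (∑ j, C i j * q j) + s * ∑ j, C i j * x j := by
            rw [Finset.mul_sum, ← Finset.sum_add_distrib]
            exact Finset.sum_congr rfl fun j _ => by ring
          rw [expand]
          have := mul_nonneg hspos.le (hrec i)
          linarith [hq i]
        have := hv _ hfeas
        have expand2 : ∑ j, c j * (q j + s * x j) = K + s * v := by
          rw [hK, hvdef, Finset.mul_sum, ← Finset.sum_add_distrib]
          exact Finset.sum_congr rfl fun j _ => by ring
        rw [expand2] at this
        have hsv : s * v = -(K - δ + 1) := by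
          have hneg : -v ≠ 0 := ne_of_gt (by linarith)
          rw [hs, div_mul_eq_mul_div, div_eq_iff hneg]
          ring
        rw [hsv] at this
        linarith
    · -- t₀ > 0 : scale down
      have hfeas : ∀ i, d i ≤ ∑ j, C i j * (x j / t₀) := by
        intro i
        have expand : ∑ j, C i j * (x j / t₀) = (∑ j, C i j * x j) / t₀ := by
          rw [Finset.sum_div]
          exact Finset.sum_congr rfl fun j _ => by ring
        rw [expand, le_div_iff₀ hpos]
        have := hrow i
        nlinarith
      have := hv _ hfeas
      have expand : ∑ j, c j * (x j / t₀) = (∑ j, c j * x j) / t₀ := by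
        rw [Finset.sum_div]
        exact Finset.sum_congr rfl fun j _ => by ring
      rw [expand, le_div_iff₀ hpos] at this
      nlinarith
  obtain ⟨Y, hY0, hYC⟩ := farkas_homog CC cobj hv'
  refine ⟨fun i => Y (.inl i), fun i => hY0 _, ?_, ?_⟩
  · intro k
    have := hYC k.succ
    rw [Fintype.sum_sum_type] at this
    simpa [hCC, hcobj] using this
  · have := hYC 0
    rw [Fintype.sum_sum_type] at this
    simp only [hCC, hcobj, Fin.cons_zero] at this
    have h1 : ∑ i, Y (.inl i) * (-(d i)) + Y (.inr ()) * 1 = -δ := by simpa using this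
    have h2 : ∑ i, Y (.inl i) * (-(d i)) = -∑ i, Y (.inl i) * d i := by
      rw [← Finset.sum_neg_distrib]
      exact Finset.sum_congr rfl fun i _ => by ring
    rw [h2] at h1
    have := hY0 (.inr ())
    linarith

/-- `Q` is cut out by finitely many inequalities with integral normals. -/
def IsIntPoly {n : ℕ} (Q : Set (Fin n → ℝ)) : Prop :=
  ∃ (ι : Type) (_ : Fintype ι) (C : ι → Fin n → ℤ) (d : ι → ℝ),
    Q = {x | ∀ i, d i ≤ ∑ j, (C i j : ℝ) * x j}

theorem IsIntPoly.chvatal_subset {n : ℕ} {Q : Set (Fin n → ℝ)} (h : IsIntPoly Q) :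
    chvatalClosure Q ⊆ Q := by
  obtain ⟨ι, hfin, C, d, rfl⟩ := h
  intro x hx i
  have hval : ∀ y ∈ {x : Fin n → ℝ | ∀ i, d i ≤ ∑ j, (C i j : ℝ) * x j},
      d i ≤ ∑ j, (C i j : ℝ) * y j := fun y hy => hy i
  have := hx (C i) (d i) hval
  calc d i ≤ (⌈d i⌉ : ℝ) := Int.le_ceil _
    _ ≤ _ := this

theorem IsIntPoly.chvatal {n : ℕ} {Q : Set (Fin n → ℝ)} (h : IsIntPoly Q) :
    IsIntPoly (chvatalClosure Q) := by
  classical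
  obtain ⟨ι, hfin, C, d, hrep⟩ := h
  haveI := hfin
  rcases Q.eq_empty_or_nonempty with hQ | ⟨q, hq⟩
  · refine ⟨Unit, inferInstance, fun _ => 0, fun _ => 1, ?_⟩
    ext x
    simp only [Set.mem_setOf_eq]
    constructor
    · intro hx _
      have := hx 0 1 (fun y hy => absurd (hQ ▸ hy) (Set.notMem_empty y))
      simpa using this
    · intro hx
      exfalso
      have := hx ()
      simp only [Pi.zero_apply, Int.cast_zero, zero_mul, Finset.sum_const_zero] at this
      linarith
  · -- nonempty case
    have hqmem : ∀ i, d i ≤ ∑ j, (C i j : ℝ) * q j := by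
      rw [hrep] at hq; exact hq
    set B : Fin n → ℤ := fun j => ∑ i, |C i j| with hB
    set T := (j : Fin n) → {z : ℤ // z ∈ Finset.Icc (-(B j)) (B j)} with hT
    set SS : (Fin n → ℤ) → Set ℝ := fun c => (fun x => ∑ j, (c j : ℝ) * x j) '' Q with hSS
    set C' : ι ⊕ T → Fin n → ℤ := fun t =>
      match t with
      | .inl i => C i
      | .inr τ => if BddBelow (SS (fun j => (τ j).1)) then (fun j => (τ j).1) else 0 with hC'
    set d' : ι ⊕ T → ℝ := fun t =>
      match t with
      | .inl i => d i
      | .inr τ => if BddBelow (SS (fun j => (τ j).1))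
          then ((⌈sInf (SS (fun j => (τ j).1))⌉ : ℤ) : ℝ) else 0 with hd'
    refine ⟨ι ⊕ T, inferInstance, C', d', ?_⟩
    ext x
    simp only [Set.mem_setOf_eq]
    constructor
    · -- closure satisfies all the rows
      intro hx t
      rcases t with i | τ
      · have := hx (C i) (d i) (fun y hy => by rw [hrep] at hy; exact hy i)
        simp only [hC', hd']
        calc d i ≤ (⌈d i⌉ : ℝ) := Int.le_ceil _
          _ ≤ _ := this
      · simp only [hC', hd']
        by_cases hbdd : BddBelow (SS (fun j => (τ j).1))
        · rw [if_pos hbdd, if_pos hbdd]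
          refine hx (fun j => (τ j).1) (sInf (SS (fun j => (τ j).1))) ?_
          intro y hy
          exact csInf_le hbdd ⟨y, hy, rfl⟩
        · rw [if_neg hbdd, if_neg hbdd]
          simp
    · -- conversely
      intro hx c δ hval
      -- Farkas
      obtain ⟨y, hy0, hyC, hyd⟩ := farkas_affine (fun i j => (C i j : ℝ)) d
        ⟨q, hqmem⟩ (fun j => (c j : ℝ)) δ
        (fun z hz => hval z (by rw [hrep]; exact hz))
      set u : ι → ℤ := fun i => ⌊y i⌋ with hu
      set f : ι → ℝ := fun i => y i - (⌊y i⌋ : ℝ) with hf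
      have hf0 : ∀ i, 0 ≤ f i := fun i => by
        simp only [hf]; linarith [Int.floor_le (y i)]
      have hf1 : ∀ i, f i ≤ 1 := fun i => by
        simp only [hf]; linarith [Int.lt_floor_add_one (y i)]
      have hu0 : ∀ i, 0 ≤ u i := fun i => Int.floor_nonneg.mpr (hy0 i)
      set c' : Fin n → ℤ := fun j => c j - ∑ i, u i * C i j with hc'
      have hc'cast : ∀ j, ((c' j : ℤ) : ℝ) = ∑ i, f i * (C i j : ℝ) := by
        intro j
        have : ∑ i, f i * (C i j : ℝ)
            = (∑ i, y i * (C i j : ℝ)) - ∑ i, (u i : ℝ) * (C i j : ℝ) := by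
          rw [← Finset.sum_sub_distrib]
          exact Finset.sum_congr rfl fun i _ => by simp only [hf, hu]; ring
        rw [this, hyC j]
        simp only [hc']
        push_cast
        ring
      -- the fractional-part vector lies in the box
      have hbox : ∀ j, |c' j| ≤ B j := by
        intro j
        have : |((c' j : ℤ) : ℝ)| ≤ ((B j : ℤ) : ℝ) := by
          rw [hc'cast j]
          calc |∑ i, f i * (C i j : ℝ)| ≤ ∑ i, |f i * (C i j : ℝ)| :=
                Finset.abs_sum_le_sum_abs _ _
            _ ≤ ∑ i, |(C i j : ℝ)| := by
                refine Finset.sum_le_sum fun i _ => ?_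
                rw [abs_mul]
                have : |f i| ≤ 1 := abs_le.mpr ⟨by linarith [hf0 i], hf1 i⟩
                nlinarith [abs_nonneg ((C i j : ℝ))]
            _ = ((B j : ℤ) : ℝ) := by
                simp only [hB]; push_cast [Int.cast_abs]; rfl
        rw [← Int.cast_abs] at this
        exact_mod_cast this
      have hswap : ∀ z : Fin n → ℝ,
          ∑ j, ((c' j : ℤ) : ℝ) * z j = ∑ i, f i * ∑ j, (C i j : ℝ) * z j := by
        intro z
        calc ∑ j, ((c' j : ℤ) : ℝ) * z j = ∑ j, ∑ i, f i * (C i j : ℝ) * z j := by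
              refine Finset.sum_congr rfl fun j _ => ?_
              rw [hc'cast j, Finset.sum_mul]
          _ = ∑ i, ∑ j, f i * (C i j : ℝ) * z j := Finset.sum_comm
          _ = ∑ i, f i * ∑ j, (C i j : ℝ) * z j := by
              refine Finset.sum_congr rfl fun i _ => ?_
              rw [Finset.mul_sum]
              exact Finset.sum_congr rfl fun j _ => by ring
      have hlow : ∀ z ∈ Q, ∑ i, f i * d i ≤ ∑ j, ((c' j : ℤ) : ℝ) * z j := by
        intro z hz
        rw [hswap z]
        have hz' := hz; rw [hrep] at hz'
        exact Finset.sum_le_sum fun i _ => mul_le_mul_of_nonneg_left (hz' i) (hf0 i)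
      have hbddc' : BddBelow (SS c') := by
        refine ⟨∑ i, f i * d i, ?_⟩
        rintro v ⟨z, hz, rfl⟩
        exact hlow z hz
      have hbddrow : ∀ i, BddBelow (SS (C i)) := by
        intro i
        refine ⟨d i, ?_⟩
        rintro v ⟨z, hz, rfl⟩
        rw [hrep] at hz
        exact hz i
      have hrowbox : ∀ i j, |C i j| ≤ B j := by
        intro i j
        simp only [hB]
        exact Finset.single_le_sum (f := fun i => |C i j|) (fun i _ => abs_nonneg _)
          (mem_univ i)
      set τrow : ι → T := fun i j => ⟨C i j, Finset.mem_Icc.mpr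
        ⟨(abs_le.mp (hrowbox i j)).1, (abs_le.mp (hrowbox i j)).2⟩⟩ with hτrow
      set τc : T := fun j => ⟨c' j, Finset.mem_Icc.mpr
        ⟨(abs_le.mp (hbox j)).1, (abs_le.mp (hbox j)).2⟩⟩ with hτc
      have hτroweq : ∀ i, (fun j => ((τrow i j : ℤ))) = C i := fun i => rfl
      have hτceq : (fun j => ((τc j : ℤ))) = c' := rfl
      have hxrow : ∀ i, ((⌈sInf (SS (C i))⌉ : ℤ) : ℝ) ≤ ∑ j, (C i j : ℝ) * x j := by
        intro i
        have hh := hx (.inr (τrow i))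
        simp only [hC', hd', hτroweq i] at hh
        rwa [if_pos (hbddrow i), if_pos (hbddrow i)] at hh
      have hxc : ((⌈sInf (SS c')⌉ : ℤ) : ℝ) ≤ ∑ j, ((c' j : ℤ) : ℝ) * x j := by
        have hh := hx (.inr τc)
        simp only [hC', hd', hτceq] at hh
        rwa [if_pos hbddc', if_pos hbddc'] at hh
      have hsinfrow : ∀ i, d i ≤ sInf (SS (C i)) := by
        intro i
        refine le_csInf ⟨_, ⟨q, hq, rfl⟩⟩ ?_
        rintro v ⟨z, hz, rfl⟩
        rw [hrep] at hz
        exact hz i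
      have hsinfc : ∑ i, f i * d i ≤ sInf (SS c') := by
        refine le_csInf ⟨_, ⟨q, hq, rfl⟩⟩ ?_
        rintro v ⟨z, hz, rfl⟩
        exact hlow z hz
      set MM : ℤ := ∑ i, u i * ⌈sInf (SS (C i))⌉ + ⌈sInf (SS c')⌉ with hMM
      have hdecomp : ∑ j, (c j : ℝ) * x j
          = ∑ i, (u i : ℝ) * ∑ j, (C i j : ℝ) * x j + ∑ j, ((c' j : ℤ) : ℝ) * x j := by
        have h1 : ∑ j, (c j : ℝ) * x j = ∑ i, y i * ∑ j, (C i j : ℝ) * x j := by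
          calc ∑ j, (c j : ℝ) * x j = ∑ j, (∑ i, y i * (C i j : ℝ)) * x j := by
                refine Finset.sum_congr rfl fun j _ => ?_
                rw [hyC j]
            _ = ∑ j, ∑ i, y i * (C i j : ℝ) * x j := by
                refine Finset.sum_congr rfl fun j _ => ?_
                rw [Finset.sum_mul]
            _ = ∑ i, ∑ j, y i * (C i j : ℝ) * x j := Finset.sum_comm
            _ = ∑ i, y i * ∑ j, (C i j : ℝ) * x j := by
                refine Finset.sum_congr rfl fun i _ => ?_
                rw [Finset.mul_sum]
                exact Finset.sum_congr rfl fun j _ => by ring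
        rw [h1, hswap x, ← Finset.sum_add_distrib]
        refine Finset.sum_congr rfl fun i _ => ?_
        have : y i = (u i : ℝ) + f i := by simp only [hf, hu]; ring
        rw [this]; ring
      have hfinal : ((MM : ℤ) : ℝ) ≤ ∑ j, (c j : ℝ) * x j := by
        rw [hdecomp, hMM]
        push_cast
        have hterm : ∀ i, (u i : ℝ) * ((⌈sInf (SS (C i))⌉ : ℤ) : ℝ)
            ≤ (u i : ℝ) * ∑ j, (C i j : ℝ) * x j := fun i =>
          mul_le_mul_of_nonneg_left (hxrow i) (by exact_mod_cast hu0 i)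
        have := Finset.sum_le_sum (fun i (_ : i ∈ univ) => hterm i)
        push_cast at this hxc ⊢
        linarith [hxc]
      have hδMM : δ ≤ ((MM : ℤ) : ℝ) := by
        have hyd' : ∑ i, y i * d i = ∑ i, (u i : ℝ) * d i + ∑ i, f i * d i := by
          rw [← Finset.sum_add_distrib]
          refine Finset.sum_congr rfl fun i _ => ?_
          have : y i = (u i : ℝ) + f i := by simp only [hf, hu]; ring
          rw [this]; ring
        have hterm : ∀ i, (u i : ℝ) * d i ≤ (u i : ℝ) * ((⌈sInf (SS (C i))⌉ : ℤ) : ℝ) := by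
          intro i
          refine mul_le_mul_of_nonneg_left ?_ (by exact_mod_cast hu0 i)
          exact le_trans (hsinfrow i) (Int.le_ceil _)
        have hsum := Finset.sum_le_sum (fun i (_ : i ∈ univ) => hterm i)
        have hc'part : ∑ i, f i * d i ≤ ((⌈sInf (SS c')⌉ : ℤ) : ℝ) :=
          le_trans hsinfc (Int.le_ceil _)
        rw [hMM]
        push_cast
        push_cast at hsum hc'part
        linarith [hyd, hyd'.symm.le]
      have hceil : (⌈δ⌉ : ℤ) ≤ MM := Int.ceil_le.mpr hδMM
      calc ((⌈δ⌉ : ℤ) : ℝ) ≤ ((MM : ℤ) : ℝ) := by exact_mod_cast hceil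
        _ ≤ _ := hfinal

theorem face_step {n : ℕ} {Q : Set (Fin n → ℝ)} (h : IsIntPoly Q)
    (α : Fin n → ℤ) (β : ℝ)
    (hval : ∀ x ∈ Q, β ≤ ∑ j, (α j : ℝ) * x j) :
    chvatalClosure (Q ∩ {x | ∑ j, (α j : ℝ) * x j = β})
      = chvatalClosure Q ∩ (Q ∩ {x | ∑ j, (α j : ℝ) * x j = β}) := by
  classical
  set G : Set (Fin n → ℝ) := Q ∩ {x | ∑ j, (α j : ℝ) * x j = β} with hG
  rcases G.eq_empty_or_nonempty with hGe | ⟨g, hgG⟩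
  · -- G empty : both sides empty
    have hcl : chvatalClosure G = ∅ := by
      ext x
      simp only [Set.mem_empty_iff_false, iff_false]
      intro hx
      have := hx 0 1 (fun y hy => absurd (hGe ▸ hy) (Set.notMem_empty y))
      simp only [Pi.zero_apply, Int.cast_zero, zero_mul, Finset.sum_const_zero] at this
      norm_num at this
    rw [hcl, hGe]
    ext x
    simp
  · have hgQ : g ∈ Q := hgG.1
    have hgα : ∑ j, (α j : ℝ) * g j = β := hgG.2
    ext x
    constructor
    · -- easy inclusion
      intro hx
      have hxQcl : x ∈ chvatalClosure Q := by
        intro c δ hv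
        exact hx c δ (fun y hy => hv y hy.1)
      have hxQ : x ∈ Q := h.chvatal_subset hxQcl
      have a1 := hx α β (fun y hy => le_of_eq hy.2.symm)
      have a2 := hx (fun j => -(α j)) (-β) (fun y hy => by
        have hsum : ∑ j, ((-(α j) : ℤ) : ℝ) * y j = -∑ j, (α j : ℝ) * y j := by
          rw [← Finset.sum_neg_distrib]
          refine Finset.sum_congr rfl fun j _ => ?_
          push_cast; ring
        rw [hsum, hy.2])
      have hsumx : ∑ j, ((-(α j) : ℤ) : ℝ) * x j = -∑ j, (α j : ℝ) * x j := by
        rw [← Finset.sum_neg_distrib]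
        refine Finset.sum_congr rfl fun j _ => ?_
        push_cast; ring
      rw [hsumx] at a2
      have hxα : ∑ j, (α j : ℝ) * x j = β := by
        have c1 := Int.le_ceil β
        have c2 := Int.le_ceil (-β)
        linarith
      exact ⟨hxQcl, hxQ, hxα⟩
    · -- hard inclusion
      rintro ⟨hxcl, hxQ, hxα⟩
      -- β is an integer
      have hβ1 := hxcl α β (fun y hy => hval y hy)
      rw [hxα] at hβ1
      have hβ : ((⌈β⌉ : ℤ) : ℝ) = β := le_antisymm hβ1 (Int.le_ceil β)
      set mβ : ℤ := ⌈β⌉ with hmβ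
      intro c δ hv
      obtain ⟨ι, hfin, C, d, hrep⟩ := h
      haveI := hfin
      -- extended system for the face G
      set CC : ι ⊕ Bool → Fin n → ℤ := fun t =>
        match t with
        | .inl i => C i
        | .inr true => α
        | .inr false => fun j => -(α j) with hCC
      set dd : ι ⊕ Bool → ℝ := fun t =>
        match t with
        | .inl i => d i
        | .inr true => β
        | .inr false => -β with hdd
      have hmemG : ∀ z : Fin n → ℝ,
          (∀ t, dd t ≤ ∑ j, ((CC t j : ℤ) : ℝ) * z j) ↔ z ∈ G := by
        intro z
        constructor
        · intro hz
          have hzQ : z ∈ Q := by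
            rw [hrep]
            exact fun i => hz (.inl i)
          have h1 := hz (.inr true)
          have h2 := hz (.inr false)
          have hsz : ∑ j, ((-(α j) : ℤ) : ℝ) * z j = -∑ j, (α j : ℝ) * z j := by
            rw [← Finset.sum_neg_distrib]
            refine Finset.sum_congr rfl fun j _ => ?_
            push_cast; ring
          simp only [hCC, hdd] at h1 h2
          rw [hsz] at h2
          exact ⟨hzQ, le_antisymm (by linarith) h1⟩
        · intro hz t
          rcases t with i | b
          · have := hz.1; rw [hrep] at this; exact this i
          · rcases b with _ | _
            · -- false
              have hsz : ∑ j, ((-(α j) : ℤ) : ℝ) * z j = -∑ j, (α j : ℝ) * z j := by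
                rw [← Finset.sum_neg_distrib]
                refine Finset.sum_congr rfl fun j _ => ?_
                push_cast; ring
              show -β ≤ ∑ j, ((-(α j) : ℤ) : ℝ) * z j
              rw [hsz, hz.2]
            · show β ≤ ∑ j, (α j : ℝ) * z j
              rw [hz.2]
      obtain ⟨Y, hY0, hYC, hYd⟩ := farkas_affine (fun t j => ((CC t j : ℤ) : ℝ)) dd
        ⟨g, (hmemG g).mpr hgG⟩ (fun j => (c j : ℝ)) δ
        (fun z hz => hv z ((hmemG z).mp hz))
      set s : ℝ := Y (.inr true) - Y (.inr false) with hs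
      set k : ℤ := max 0 ⌈-s⌉ with hk
      have hk0 : (0 : ℤ) ≤ k := le_max_left _ _
      have hks : 0 ≤ s + (k : ℝ) := by
        have h1 : ((⌈-s⌉ : ℤ) : ℝ) ≤ (k : ℝ) := by exact_mod_cast le_max_right _ _
        have h2 := Int.le_ceil (-s)
        linarith
      -- the lifted inequality is valid on Q
      have hval2 : ∀ z ∈ Q, δ + (k : ℝ) * β ≤ ∑ j, ((c j + k * α j : ℤ) : ℝ) * z j := by
        intro z hz
        have hzrows : ∀ i, d i ≤ ∑ j, (C i j : ℝ) * z j := by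
          rw [hrep] at hz; exact hz
        have hzα : β ≤ ∑ j, (α j : ℝ) * z j := hval z hz
        have hexp : ∑ j, ((c j + k * α j : ℤ) : ℝ) * z j
            = (∑ j, (c j : ℝ) * z j) + (k : ℝ) * ∑ j, (α j : ℝ) * z j := by
          rw [Finset.mul_sum, ← Finset.sum_add_distrib]
          refine Finset.sum_congr rfl fun j _ => ?_
          push_cast; ring
        have hcz : ∑ j, (c j : ℝ) * z j = ∑ t, Y t * ∑ j, ((CC t j : ℤ) : ℝ) * z j := by
          calc ∑ j, (c j : ℝ) * z j = ∑ j, (∑ t, Y t * ((CC t j : ℤ) : ℝ)) * z j := by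
                refine Finset.sum_congr rfl fun j _ => ?_
                rw [hYC j]
            _ = ∑ j, ∑ t, Y t * ((CC t j : ℤ) : ℝ) * z j := by
                refine Finset.sum_congr rfl fun j _ => ?_
                rw [Finset.sum_mul]
            _ = ∑ t, ∑ j, Y t * ((CC t j : ℤ) : ℝ) * z j := Finset.sum_comm
            _ = ∑ t, Y t * ∑ j, ((CC t j : ℤ) : ℝ) * z j := by
                refine Finset.sum_congr rfl fun t _ => ?_
                rw [Finset.mul_sum]
                exact Finset.sum_congr rfl fun j _ => by ring
        have hsplit : ∑ t, Y t * ∑ j, ((CC t j : ℤ) : ℝ) * z j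
            = (∑ i, Y (.inl i) * ∑ j, (C i j : ℝ) * z j)
              + s * ∑ j, (α j : ℝ) * z j := by
          rw [Fintype.sum_sum_type, Fintype.sum_bool]
          have hneg : ∑ j, ((CC (.inr false) j : ℤ) : ℝ) * z j
              = -∑ j, (α j : ℝ) * z j := by
            simp only [hCC]
            rw [← Finset.sum_neg_distrib]
            refine Finset.sum_congr rfl fun j _ => ?_
            push_cast; ring
          rw [hneg]
          simp only [hCC, hs]
          ring
        have hdsplit : ∑ t, Y t * dd t
            = (∑ i, Y (.inl i) * d i) + s * β := by
          rw [Fintype.sum_sum_type, Fintype.sum_bool]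
          simp only [hdd, hs]
          ring
        have hbound : (∑ i, Y (.inl i) * d i) + (s + (k:ℝ)) * β
            ≤ (∑ i, Y (.inl i) * ∑ j, (C i j : ℝ) * z j)
              + (s + (k:ℝ)) * ∑ j, (α j : ℝ) * z j := by
          have h1 : ∑ i, Y (.inl i) * d i ≤ ∑ i, Y (.inl i) * ∑ j, (C i j : ℝ) * z j :=
            Finset.sum_le_sum fun i _ => mul_le_mul_of_nonneg_left (hzrows i) (hY0 _)
          have h2 : (s + (k:ℝ)) * β ≤ (s + (k:ℝ)) * ∑ j, (α j : ℝ) * z j :=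
            mul_le_mul_of_nonneg_left hzα hks
          linarith
        rw [hexp, hcz, hsplit]
        have hYdd : δ ≤ (∑ i, Y (.inl i) * d i) + s * β := by rw [← hdsplit]; exact hYd
        nlinarith [hbound]
      -- apply the closure property of x for the lifted inequality
      have hfin2 := hxcl (fun j => c j + k * α j) (δ + (k : ℝ) * β) hval2
      have hexpx : ∑ j, ((c j + k * α j : ℤ) : ℝ) * x j
          = (∑ j, (c j : ℝ) * x j) + (k : ℝ) * β := by
        rw [← hxα, Finset.mul_sum, ← Finset.sum_add_distrib]
        refine Finset.sum_congr rfl fun j _ => ?_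
        push_cast; ring
      rw [hexpx] at hfin2
      have hceil : ⌈δ + (k : ℝ) * β⌉ = ⌈δ⌉ + k * mβ := by
        rw [show (k : ℝ) * β = ((k * mβ : ℤ) : ℝ) by rw [← hβ]; push_cast; ring]
        exact Int.ceil_add_intCast δ (k * mβ)
      rw [hceil] at hfin2
      have : ((⌈δ⌉ + k * mβ : ℤ) : ℝ) = (⌈δ⌉ : ℝ) + (k : ℝ) * β := by
        rw [← hβ]; push_cast; ring
      rw [this] at hfin2
      linarith

theorem row_scale {n : ℕ} (a : Fin n → ℚ) :
    ∃ (D : ℕ) (c : Fin n → ℤ), 0 < D ∧ ∀ j, ((c j : ℤ) : ℝ) = (a j : ℝ) * (D : ℝ) := by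
  obtain ⟨D, hD⟩ : ∃ D : ℕ, D = Finset.univ.lcm (fun j => (a j).den) := ⟨_, rfl⟩
  have hDpos : 0 < D := by
    rw [hD]
    rcases Nat.eq_zero_or_pos (Finset.univ.lcm (fun j => (a j).den)) with h0 | h
    · exfalso
      rw [Finset.lcm_eq_zero_iff] at h0
      obtain ⟨j, _, hj⟩ := h0
      exact (a j).den_nz hj
    · exact h
  refine ⟨D, fun j => (a j).num * ((D / (a j).den : ℕ) : ℤ), hDpos, ?_⟩
  intro j
  have hdvd : (a j).den ∣ D := hD ▸ Finset.dvd_lcm (Finset.mem_univ j)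
  obtain ⟨e, he⟩ := hdvd
  have hdiv : D / (a j).den = e := by
    rw [he]; exact Nat.mul_div_cancel_left e (a j).pos
  have hQ : (((a j).num * ((D / (a j).den : ℕ) : ℤ) : ℤ) : ℚ) = a j * (D : ℚ) := by
    rw [hdiv]
    have hden0 : ((a j).den : ℚ) ≠ 0 := by
      exact_mod_cast (a j).den_nz
    have hDq : (D : ℚ) = ((a j).den : ℚ) * (e : ℚ) := by exact_mod_cast he
    have h1 : ((a j).num : ℚ) = a j * ((a j).den : ℚ) :=
      (div_eq_iff hden0).mp (Rat.num_div_den (a j))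
    rw [hDq]
    push_cast
    rw [h1]
    ring
  have := congrArg (fun q : ℚ => (q : ℝ)) hQ
  push_cast at this ⊢
  exact_mod_cast this


/-- Let `P = {x : Ax ≥ b}` with `A` rational, `b ∈ ℝ^m` arbitrary, let
`α ∈ ℤ^n`, `β ∈ ℝ` with `α·x ≥ β` valid for `P`, and let `F = P ∩ {x : α·x = β}` be the
corresponding face. Then `F^{(t)} = P^{(t)} ∩ F` for all `t`. -/
theorem face_iterated_closure {m n : ℕ} (A : Matrix (Fin m) (Fin n) ℚ) (b : Fin m → ℝ)
    (P : Set (Fin n → ℝ)) (hP : P = {x | ∀ i, b i ≤ ∑ j, (A i j : ℝ) * x j})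
    (α : Fin n → ℤ) (β : ℝ)
    (hvalid : ∀ x ∈ P, β ≤ ∑ j, (α j : ℝ) * x j)
    (F : Set (Fin n → ℝ)) (hF : F = P ∩ {x | ∑ j, (α j : ℝ) * x j = β}) :
    ∀ t : ℕ, iterChvatal F t = iterChvatal P t ∩ F := by
  classical
  subst hF
  have hIP0 : IsIntPoly P := by
    choose D C hDpos hkeyR using fun i => row_scale (fun j => A i j)
    refine ⟨Fin m, inferInstance, C, fun i => b i * (D i : ℝ), ?_⟩
    rw [hP]
    ext x
    simp only [Set.mem_setOf_eq]
    have hsum : ∀ i, ∑ j, ((C i j : ℤ) : ℝ) * x j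
        = (∑ j, (A i j : ℝ) * x j) * ((D i : ℕ) : ℝ) := by
      intro i
      rw [Finset.sum_mul]
      refine Finset.sum_congr rfl fun j _ => ?_
      rw [hkeyR i j]; ring
    constructor
    · intro hx i
      rw [hsum i]
      have hDr : (0:ℝ) < ((D i : ℕ) : ℝ) := by exact_mod_cast hDpos i
      exact mul_le_mul_of_nonneg_right (hx i) hDr.le
    · intro hx i
      have := hx i
      rw [hsum i] at this
      have hDr : (0:ℝ) < ((D i : ℕ) : ℝ) := by exact_mod_cast hDpos i
      nlinarith
  have hFP : P ∩ {x | ∑ j, (α j : ℝ) * x j = β} ⊆ P := Set.inter_subset_left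
  have main : ∀ t, IsIntPoly (iterChvatal P t) ∧ iterChvatal P t ⊆ P ∧
      iterChvatal (P ∩ {x | ∑ j, (α j : ℝ) * x j = β}) t
        = iterChvatal P t ∩ (P ∩ {x | ∑ j, (α j : ℝ) * x j = β}) := by
    intro t
    induction t with
    | zero =>
      refine ⟨hIP0, le_refl P, ?_⟩
      show P ∩ _ = P ∩ (P ∩ _)
      rw [Set.inter_eq_self_of_subset_right hFP]
    | succ t IH =>
      obtain ⟨hIP, hsub, hface⟩ := IH
      have hclsub : chvatalClosure (iterChvatal P t) ⊆ iterChvatal P t := hIP.chvatal_subset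
      refine ⟨hIP.chvatal, hclsub.trans hsub, ?_⟩
      show chvatalClosure (iterChvatal (P ∩ {x | ∑ j, (α j : ℝ) * x j = β}) t)
        = chvatalClosure (iterChvatal P t) ∩ (P ∩ {x | ∑ j, (α j : ℝ) * x j = β})
      rw [hface]
      have hQF : iterChvatal P t ∩ (P ∩ {x | ∑ j, (α j : ℝ) * x j = β})
          = iterChvatal P t ∩ {x | ∑ j, (α j : ℝ) * x j = β} := by
        ext z
        constructor
        · rintro ⟨hzQ, _, hzα⟩; exact ⟨hzQ, hzα⟩
        · rintro ⟨hzQ, hzα⟩; exact ⟨hzQ, hsub hzQ, hzα⟩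
      rw [hQF, face_step hIP α β (fun z hz => hvalid z (hsub hz))]
      ext z
      constructor
      · rintro ⟨hzcl, hzQ, hzα⟩
        exact ⟨hzcl, hsub hzQ, hzα⟩
      · rintro ⟨hzcl, _, hzα⟩
        exact ⟨hzcl, hclsub hzcl, hzα⟩
  exact fun t => (main t).2.2
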